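/- Let n be a positive integer with n ≡ 0 (mod 4). Then the following equalities of representation numbers of n^2 hold: r7(1,2,2,2,2,2,4; n^2) = r7(1,1,2,2,2,4,4; n^2) = r7(1,1,1,2,4,4,4; n^2), and r7(1,1,1,2,2,2,4; n^2) = r7(1,1,1,1,2,4,4; n^2). -/
import Mathlib

open Finset

/-- The number of representations of `n` by the quadratic form
`a 0 * x 0 ^ 2 + ... + a 6 * x 6 ^ 2`. -/
noncomputable def r7 (a : Fin 7 → ℕ) (n : ℕ) : ℕ :=
  Set.ncard {x : Fin 7 → ℤ | ∑ i, (a i : ℤ) * x i ^ 2 = (n : ℤ)}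

private lemma sq2 (x : ℤ) : x ^ 2 % 2 = x % 2 := by
  rcases Int.even_or_odd x with ⟨m, hm⟩ | ⟨m, hm⟩ <;> subst hm
  · have h : (m + m) ^ 2 = 4 * m ^ 2 := by ring
    rw [h]; omega
  · have h : (2 * m + 1) ^ 2 = 4 * m ^ 2 + 4 * m + 1 := by ring
    rw [h]; omega

private lemma sqf (x : ℤ) : x ^ 2 % 2 = x % 2 ∧
    (x ^ 2 % 8 = 0 ∨ x ^ 2 % 8 = 1 ∨ x ^ 2 % 8 = 4) ∧
    (x % 2 = 1 → x ^ 2 % 8 = 1) ∧ (x % 2 = 0 → (x ^ 2 % 8 = 0 ∨ x ^ 2 % 8 = 4)) := by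
  refine ⟨sq2 x, ?_⟩
  rcases Int.even_or_odd x with ⟨m, hm⟩ | ⟨m, hm⟩ <;> subst hm
  · have h : (m + m) ^ 2 = 4 * m ^ 2 := by ring
    have h2 := sq2 m
    rw [h]; omega
  · have h : (2 * m + 1) ^ 2 = 4 * (m ^ 2 + m) + 1 := by ring
    have h2 := sq2 m
    rw [h]; omega

private def sol (a : Fin 7 → ℕ) (N : ℤ) : Set (Fin 7 → ℤ) :=
  {x : Fin 7 → ℤ | ∑ i, (a i : ℤ) * x i ^ 2 = N}

private lemma r7_eq_sol (a : Fin 7 → ℕ) (n : ℕ) : r7 a n = (sol a (n : ℤ)).ncard := rfl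

private lemma sol_fin (a : Fin 7 → ℕ) (ha : ∀ i, 1 ≤ a i) (N : ℤ) : (sol a N).Finite := by
  apply Set.Finite.subset (Set.Finite.pi (fun i : Fin 7 => Set.finite_Icc (-N) N))
  intro x hx
  simp only [Set.mem_pi, Set.mem_univ, forall_true_left, Set.mem_Icc]
  intro i
  have hterm : ∀ j : Fin 7, 0 ≤ (a j : ℤ) * x j ^ 2 := fun j =>
    mul_nonneg (by positivity) (sq_nonneg _)
  have h1 : (a i : ℤ) * x i ^ 2 ≤ N := by
    have := Finset.single_le_sum (f := fun j => (a j : ℤ) * x j ^ 2)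
      (fun j _ => hterm j) (Finset.mem_univ i)
    calc (a i : ℤ) * x i ^ 2 ≤ _ := this
    _ = N := hx
  have hai : (1 : ℤ) ≤ (a i : ℤ) := by exact_mod_cast ha i
  have h2 : x i ^ 2 ≤ N := by nlinarith [sq_nonneg (x i)]
  constructor <;> nlinarith [sq_nonneg (x i + 1), sq_nonneg (x i - 1), sq_nonneg (x i)]

private lemma ncard_bij {α β : Type*} (f : α → β) (g : β → α) {S : Set α} {T : Set β}
    (hf : ∀ x ∈ S, f x ∈ T) (hg : ∀ y ∈ T, g y ∈ S)
    (hgf : ∀ x ∈ S, g (f x) = x) (hfg : ∀ y ∈ T, f (g y) = y) : S.ncard = T.ncard := by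
  have himg : f '' S = T := by
    apply subset_antisymm
    · rintro _ ⟨x, hx, rfl⟩; exact hf x hx
    · intro y hy; exact ⟨g y, hg y hy, hfg y hy⟩
  have hinj : Set.InjOn f S := fun x hx x' hx' h => by
    rw [← hgf x hx, h, hgf x' hx']
  rw [← himg, Set.ncard_image_of_injOn hinj]
private lemma memA {N : ℤ} {x : Fin 7 → ℤ} :
    x ∈ sol ![1,2,2,2,2,2,4] N ↔
      x 0^2 + 2*x 1^2 + 2*x 2^2 + 2*x 3^2 + 2*x 4^2 + 2*x 5^2 + 4*x 6^2 = N := by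
  simp only [sol, Set.mem_setOf_eq, Fin.sum_univ_seven,
    show (![1,2,2,2,2,2,4] : Fin 7 → ℕ) 0 = 1 from rfl,
    show (![1,2,2,2,2,2,4] : Fin 7 → ℕ) 1 = 2 from rfl,
    show (![1,2,2,2,2,2,4] : Fin 7 → ℕ) 2 = 2 from rfl,
    show (![1,2,2,2,2,2,4] : Fin 7 → ℕ) 3 = 2 from rfl,
    show (![1,2,2,2,2,2,4] : Fin 7 → ℕ) 4 = 2 from rfl,
    show (![1,2,2,2,2,2,4] : Fin 7 → ℕ) 5 = 2 from rfl,
    show (![1,2,2,2,2,2,4] : Fin 7 → ℕ) 6 = 4 from rfl]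
  push_cast
  constructor <;> intro h <;> linarith

private lemma memB {N : ℤ} {x : Fin 7 → ℤ} :
    x ∈ sol ![1,1,2,2,2,4,4] N ↔
      x 0^2 + x 1^2 + 2*x 2^2 + 2*x 3^2 + 2*x 4^2 + 4*x 5^2 + 4*x 6^2 = N := by
  simp only [sol, Set.mem_setOf_eq, Fin.sum_univ_seven,
    show (![1,1,2,2,2,4,4] : Fin 7 → ℕ) 0 = 1 from rfl,
    show (![1,1,2,2,2,4,4] : Fin 7 → ℕ) 1 = 1 from rfl,
    show (![1,1,2,2,2,4,4] : Fin 7 → ℕ) 2 = 2 from rfl,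
    show (![1,1,2,2,2,4,4] : Fin 7 → ℕ) 3 = 2 from rfl,
    show (![1,1,2,2,2,4,4] : Fin 7 → ℕ) 4 = 2 from rfl,
    show (![1,1,2,2,2,4,4] : Fin 7 → ℕ) 5 = 4 from rfl,
    show (![1,1,2,2,2,4,4] : Fin 7 → ℕ) 6 = 4 from rfl]
  push_cast
  constructor <;> intro h <;> linarith

private lemma memC {N : ℤ} {x : Fin 7 → ℤ} :
    x ∈ sol ![1,1,1,2,4,4,4] N ↔
      x 0^2 + x 1^2 + x 2^2 + 2*x 3^2 + 4*x 4^2 + 4*x 5^2 + 4*x 6^2 = N := by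
  simp only [sol, Set.mem_setOf_eq, Fin.sum_univ_seven,
    show (![1,1,1,2,4,4,4] : Fin 7 → ℕ) 0 = 1 from rfl,
    show (![1,1,1,2,4,4,4] : Fin 7 → ℕ) 1 = 1 from rfl,
    show (![1,1,1,2,4,4,4] : Fin 7 → ℕ) 2 = 1 from rfl,
    show (![1,1,1,2,4,4,4] : Fin 7 → ℕ) 3 = 2 from rfl,
    show (![1,1,1,2,4,4,4] : Fin 7 → ℕ) 4 = 4 from rfl,
    show (![1,1,1,2,4,4,4] : Fin 7 → ℕ) 5 = 4 from rfl,
    show (![1,1,1,2,4,4,4] : Fin 7 → ℕ) 6 = 4 from rfl]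
  push_cast
  constructor <;> intro h <;> linarith

private lemma memD {N : ℤ} {x : Fin 7 → ℤ} :
    x ∈ sol ![1,1,1,2,2,2,4] N ↔
      x 0^2 + x 1^2 + x 2^2 + 2*x 3^2 + 2*x 4^2 + 2*x 5^2 + 4*x 6^2 = N := by
  simp only [sol, Set.mem_setOf_eq, Fin.sum_univ_seven,
    show (![1,1,1,2,2,2,4] : Fin 7 → ℕ) 0 = 1 from rfl,
    show (![1,1,1,2,2,2,4] : Fin 7 → ℕ) 1 = 1 from rfl,
    show (![1,1,1,2,2,2,4] : Fin 7 → ℕ) 2 = 1 from rfl,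
    show (![1,1,1,2,2,2,4] : Fin 7 → ℕ) 3 = 2 from rfl,
    show (![1,1,1,2,2,2,4] : Fin 7 → ℕ) 4 = 2 from rfl,
    show (![1,1,1,2,2,2,4] : Fin 7 → ℕ) 5 = 2 from rfl,
    show (![1,1,1,2,2,2,4] : Fin 7 → ℕ) 6 = 4 from rfl]
  push_cast
  constructor <;> intro h <;> linarith

private lemma memE {N : ℤ} {x : Fin 7 → ℤ} :
    x ∈ sol ![1,1,1,1,2,4,4] N ↔
      x 0^2 + x 1^2 + x 2^2 + x 3^2 + 2*x 4^2 + 4*x 5^2 + 4*x 6^2 = N := by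
  simp only [sol, Set.mem_setOf_eq, Fin.sum_univ_seven,
    show (![1,1,1,1,2,4,4] : Fin 7 → ℕ) 0 = 1 from rfl,
    show (![1,1,1,1,2,4,4] : Fin 7 → ℕ) 1 = 1 from rfl,
    show (![1,1,1,1,2,4,4] : Fin 7 → ℕ) 2 = 1 from rfl,
    show (![1,1,1,1,2,4,4] : Fin 7 → ℕ) 3 = 1 from rfl,
    show (![1,1,1,1,2,4,4] : Fin 7 → ℕ) 4 = 2 from rfl,
    show (![1,1,1,1,2,4,4] : Fin 7 → ℕ) 5 = 4 from rfl,
    show (![1,1,1,1,2,4,4] : Fin 7 → ℕ) 6 = 4 from rfl]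
  push_cast
  constructor <;> intro h <;> linarith

private lemma memF {N : ℤ} {x : Fin 7 → ℤ} :
    x ∈ sol ![1,1,2,4,4,4,4] N ↔
      x 0^2 + x 1^2 + 2*x 2^2 + 4*x 3^2 + 4*x 4^2 + 4*x 5^2 + 4*x 6^2 = N := by
  simp only [sol, Set.mem_setOf_eq, Fin.sum_univ_seven,
    show (![1,1,2,4,4,4,4] : Fin 7 → ℕ) 0 = 1 from rfl,
    show (![1,1,2,4,4,4,4] : Fin 7 → ℕ) 1 = 1 from rfl,
    show (![1,1,2,4,4,4,4] : Fin 7 → ℕ) 2 = 2 from rfl,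
    show (![1,1,2,4,4,4,4] : Fin 7 → ℕ) 3 = 4 from rfl,
    show (![1,1,2,4,4,4,4] : Fin 7 → ℕ) 4 = 4 from rfl,
    show (![1,1,2,4,4,4,4] : Fin 7 → ℕ) 5 = 4 from rfl,
    show (![1,1,2,4,4,4,4] : Fin 7 → ℕ) 6 = 4 from rfl]
  push_cast
  constructor <;> intro h <;> linarith
private lemma cv0 {α : Type*} (a b c d e f g : α) : ![a,b,c,d,e,f,g] 0 = a := rfl
private lemma cv1 {α : Type*} (a b c d e f g : α) : ![a,b,c,d,e,f,g] 1 = b := rfl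
private lemma cv2 {α : Type*} (a b c d e f g : α) : ![a,b,c,d,e,f,g] 2 = c := rfl
private lemma cv3 {α : Type*} (a b c d e f g : α) : ![a,b,c,d,e,f,g] 3 = d := rfl
private lemma cv4 {α : Type*} (a b c d e f g : α) : ![a,b,c,d,e,f,g] 4 = e := rfl
private lemma cv5 {α : Type*} (a b c d e f g : α) : ![a,b,c,d,e,f,g] 5 = f := rfl
private lemma cv6 {α : Type*} (a b c d e f g : α) : ![a,b,c,d,e,f,g] 6 = g := rfl

private lemma funext7 {v w : Fin 7 → ℤ} (h0 : v 0 = w 0) (h1 : v 1 = w 1) (h2 : v 2 = w 2)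
    (h3 : v 3 = w 3) (h4 : v 4 = w 4) (h5 : v 5 = w 5) (h6 : v 6 = w 6) : v = w := by
  funext i; fin_cases i <;> assumption

private lemma id1 {N : ℤ} (hN : N % 2 = 0) :
    (sol ![1,2,2,2,2,2,4] N).ncard = (sol ![1,1,2,2,2,4,4] N).ncard := by
  apply ncard_bij (fun x => ![x 4 + x 5, x 4 - x 5, x 1, x 2, x 3, x 6, x 0 / 2])
      (fun y => ![2 * y 6, y 2, y 3, y 4, (y 0 + y 1) / 2, (y 0 - y 1) / 2, y 5])
  · intro x hx
    rw [memA] at hx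
    obtain ⟨h02, -, -, -⟩ := sqf (x 0)
    obtain ⟨k, hk⟩ : ∃ k, x 0 = 2 * k := ⟨x 0 / 2, by omega⟩
    rw [memB]
    simp only [cv0, cv1, cv2, cv3, cv4, cv5, cv6]
    rw [hk] at hx ⊢
    have h2 : 2 * k / 2 = k := by omega
    rw [h2]
    linear_combination hx
  · intro y hy
    rw [memB] at hy
    obtain ⟨h02, -, -, -⟩ := sqf (y 0)
    obtain ⟨h12, -, -, -⟩ := sqf (y 1)
    have hpar : y 0 % 2 = y 1 % 2 := by omega
    obtain ⟨u, hu⟩ : ∃ u, y 0 + y 1 = 2 * u := ⟨(y 0 + y 1) / 2, by omega⟩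
    obtain ⟨v, hv⟩ : ∃ v, y 0 - y 1 = 2 * v := ⟨(y 0 - y 1) / 2, by omega⟩
    have hy0 : y 0 = u + v := by omega
    have hy1 : y 1 = u - v := by omega
    rw [memA]
    simp only [cv0, cv1, cv2, cv3, cv4, cv5, cv6]
    rw [hu, hv]
    rw [hy0, hy1] at hy
    have h2 : 2 * u / 2 = u := by omega
    have h3 : 2 * v / 2 = v := by omega
    rw [h2, h3]
    linear_combination hy
  · intro x hx
    rw [memA] at hx
    obtain ⟨h02, -, -, -⟩ := sqf (x 0)
    apply funext7 <;> simp only [cv0, cv1, cv2, cv3, cv4, cv5, cv6] <;> omega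
  · intro y hy
    rw [memB] at hy
    obtain ⟨h02, -, -, -⟩ := sqf (y 0)
    obtain ⟨h12, -, -, -⟩ := sqf (y 1)
    apply funext7 <;> simp only [cv0, cv1, cv2, cv3, cv4, cv5, cv6] <;> omega
/- Piece sets -/
private def Be (N : ℤ) : Set (Fin 7 → ℤ) := sol ![1,1,2,2,2,4,4] N ∩ {x | x 0 % 2 = 0}
private def Bo (N : ℤ) : Set (Fin 7 → ℤ) := sol ![1,1,2,2,2,4,4] N ∩ {x | x 0 % 2 = 1}
private def Ce (N : ℤ) : Set (Fin 7 → ℤ) := sol ![1,1,1,2,4,4,4] N ∩ {x | x 0 % 2 = 0}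
private def Co (N : ℤ) : Set (Fin 7 → ℤ) := sol ![1,1,1,2,4,4,4] N ∩ {x | x 0 % 2 = 1}
private def P111 (N : ℤ) : Set (Fin 7 → ℤ) :=
  sol ![1,1,2,2,2,4,4] N ∩ {x | x 0 % 2 = 1 ∧ x 2 % 2 = 1 ∧ x 3 % 2 = 1 ∧ x 4 % 2 = 1}
private def P100 (N : ℤ) : Set (Fin 7 → ℤ) :=
  sol ![1,1,2,2,2,4,4] N ∩ {x | x 0 % 2 = 1 ∧ x 2 % 2 = 1 ∧ x 3 % 2 = 0 ∧ x 4 % 2 = 0}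
private def P010 (N : ℤ) : Set (Fin 7 → ℤ) :=
  sol ![1,1,2,2,2,4,4] N ∩ {x | x 0 % 2 = 1 ∧ x 2 % 2 = 0 ∧ x 3 % 2 = 1 ∧ x 4 % 2 = 0}
private def P001 (N : ℤ) : Set (Fin 7 → ℤ) :=
  sol ![1,1,2,2,2,4,4] N ∩ {x | x 0 % 2 = 1 ∧ x 2 % 2 = 0 ∧ x 3 % 2 = 0 ∧ x 4 % 2 = 1}
private def FA (N : ℤ) : Set (Fin 7 → ℤ) :=
  sol ![1,1,2,4,4,4,4] N ∩
    {z | z 0 % 2 = 1 ∧ z 1 % 2 = 1 ∧ z 2 % 2 = 1 ∧ z 3 % 2 = z 4 % 2 ∧ (z 5 + z 6) % 2 = 1}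
private def FB (N : ℤ) : Set (Fin 7 → ℤ) :=
  sol ![1,1,2,4,4,4,4] N ∩
    {z | z 0 % 2 = 1 ∧ z 1 % 2 = 1 ∧ z 2 % 2 = 1 ∧ (z 3 + z 4) % 2 = 1 ∧ z 5 % 2 = z 6 % 2}
private def Fst (N : ℤ) : Set (Fin 7 → ℤ) :=
  sol ![1,1,2,4,4,4,4] N ∩ {z | z 0 % 2 = 1 ∧ z 1 % 2 = 1 ∧ z 2 % 2 = 1}
private def C1 (N : ℤ) : Set (Fin 7 → ℤ) :=
  sol ![1,1,1,2,4,4,4] N ∩ {x | x 0 % 2 = 1 ∧ x 1 % 2 = 1 ∧ x 2 % 2 = 0}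
private def C2 (N : ℤ) : Set (Fin 7 → ℤ) :=
  sol ![1,1,1,2,4,4,4] N ∩ {x | x 0 % 2 = 1 ∧ x 1 % 2 = 0 ∧ x 2 % 2 = 1}
private def Ds (N : ℤ) : Set (Fin 7 → ℤ) := sol ![1,1,1,2,2,2,4] N ∩ {x | x 0 % 2 = x 1 % 2}
private def Deo (N : ℤ) : Set (Fin 7 → ℤ) :=
  sol ![1,1,1,2,2,2,4] N ∩ {x | x 0 % 2 = 0 ∧ x 1 % 2 = 1}
private def Doe (N : ℤ) : Set (Fin 7 → ℤ) :=
  sol ![1,1,1,2,2,2,4] N ∩ {x | x 0 % 2 = 1 ∧ x 1 % 2 = 0}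
private def Es (N : ℤ) : Set (Fin 7 → ℤ) := sol ![1,1,1,1,2,4,4] N ∩ {x | x 0 % 2 = x 1 % 2}
private def Eeo (N : ℤ) : Set (Fin 7 → ℤ) :=
  sol ![1,1,1,1,2,4,4] N ∩ {x | x 0 % 2 = 0 ∧ x 1 % 2 = 1}
private def Eoe (N : ℤ) : Set (Fin 7 → ℤ) :=
  sol ![1,1,1,1,2,4,4] N ∩ {x | x 0 % 2 = 1 ∧ x 1 % 2 = 0}

private lemma B_split (N : ℤ) :
    (sol ![1,1,2,2,2,4,4] N).ncard = (Be N).ncard + (Bo N).ncard := by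
  have hfin := sol_fin ![1,1,2,2,2,4,4] (by decide) N
  have f1 : (Be N).Finite := hfin.subset Set.inter_subset_left
  have f2 : (Bo N).Finite := hfin.subset Set.inter_subset_left
  have heq : sol ![1,1,2,2,2,4,4] N = Be N ∪ Bo N := by
    ext x
    simp only [Be, Bo, Set.mem_union, Set.mem_inter_iff, Set.mem_setOf_eq]
    constructor
    · intro h
      by_cases h0 : x 0 % 2 = 0
      · exact Or.inl ⟨h, h0⟩
      · exact Or.inr ⟨h, by omega⟩
    · rintro (⟨h, -⟩ | ⟨h, -⟩) <;> exact h
  have hd : Disjoint (Be N) (Bo N) := by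
    rw [Set.disjoint_left]
    rintro x ⟨-, h0⟩ ⟨-, h1⟩
    simp only [Set.mem_setOf_eq] at h0 h1
    omega
  rw [heq, Set.ncard_union_eq hd f1 f2]

private lemma C_split (N : ℤ) :
    (sol ![1,1,1,2,4,4,4] N).ncard = (Ce N).ncard + (Co N).ncard := by
  have hfin := sol_fin ![1,1,1,2,4,4,4] (by decide) N
  have f1 : (Ce N).Finite := hfin.subset Set.inter_subset_left
  have f2 : (Co N).Finite := hfin.subset Set.inter_subset_left
  have heq : sol ![1,1,1,2,4,4,4] N = Ce N ∪ Co N := by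
    ext x
    simp only [Ce, Co, Set.mem_union, Set.mem_inter_iff, Set.mem_setOf_eq]
    constructor
    · intro h
      by_cases h0 : x 0 % 2 = 0
      · exact Or.inl ⟨h, h0⟩
      · exact Or.inr ⟨h, by omega⟩
    · rintro (⟨h, -⟩ | ⟨h, -⟩) <;> exact h
  have hd : Disjoint (Ce N) (Co N) := by
    rw [Set.disjoint_left]
    rintro x ⟨-, h0⟩ ⟨-, h1⟩
    simp only [Set.mem_setOf_eq] at h0 h1
    omega
  rw [heq, Set.ncard_union_eq hd f1 f2]

private lemma D_split (N : ℤ) :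
    (sol ![1,1,1,2,2,2,4] N).ncard = (Ds N).ncard + (Deo N).ncard + (Doe N).ncard := by
  have hfin := sol_fin ![1,1,1,2,2,2,4] (by decide) N
  have f1 : (Ds N).Finite := hfin.subset Set.inter_subset_left
  have f2 : (Deo N).Finite := hfin.subset Set.inter_subset_left
  have f3 : (Doe N).Finite := hfin.subset Set.inter_subset_left
  have heq : sol ![1,1,1,2,2,2,4] N = (Ds N ∪ Deo N) ∪ Doe N := by
    ext x
    simp only [Ds, Deo, Doe, Set.mem_union, Set.mem_inter_iff, Set.mem_setOf_eq]
    constructor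
    · intro h
      by_cases h0 : x 0 % 2 = x 1 % 2
      · exact Or.inl (Or.inl ⟨h, h0⟩)
      · by_cases h1 : x 0 % 2 = 0
        · exact Or.inl (Or.inr ⟨h, h1, by omega⟩)
        · exact Or.inr ⟨h, by omega, by omega⟩
    · rintro ((⟨h, -⟩ | ⟨h, -⟩) | ⟨h, -⟩) <;> exact h
  have hd1 : Disjoint (Ds N ∪ Deo N) (Doe N) := by
    rw [Set.disjoint_left]
    rintro x hx ⟨-, h1⟩
    simp only [Set.mem_setOf_eq] at h1
    rcases hx with ⟨-, h0⟩ | ⟨-, h0⟩ <;> simp only [Set.mem_setOf_eq] at h0 <;> omega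
  have hd2 : Disjoint (Ds N) (Deo N) := by
    rw [Set.disjoint_left]
    rintro x ⟨-, h0⟩ ⟨-, h1⟩
    simp only [Set.mem_setOf_eq] at h0 h1
    omega
  rw [heq, Set.ncard_union_eq hd1 (f1.union f2) f3, Set.ncard_union_eq hd2 f1 f2]

private lemma E_split (N : ℤ) :
    (sol ![1,1,1,1,2,4,4] N).ncard = (Es N).ncard + (Eeo N).ncard + (Eoe N).ncard := by
  have hfin := sol_fin ![1,1,1,1,2,4,4] (by decide) N
  have f1 : (Es N).Finite := hfin.subset Set.inter_subset_left
  have f2 : (Eeo N).Finite := hfin.subset Set.inter_subset_left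
  have f3 : (Eoe N).Finite := hfin.subset Set.inter_subset_left
  have heq : sol ![1,1,1,1,2,4,4] N = (Es N ∪ Eeo N) ∪ Eoe N := by
    ext x
    simp only [Es, Eeo, Eoe, Set.mem_union, Set.mem_inter_iff, Set.mem_setOf_eq]
    constructor
    · intro h
      by_cases h0 : x 0 % 2 = x 1 % 2
      · exact Or.inl (Or.inl ⟨h, h0⟩)
      · by_cases h1 : x 0 % 2 = 0
        · exact Or.inl (Or.inr ⟨h, h1, by omega⟩)
        · exact Or.inr ⟨h, by omega, by omega⟩
    · rintro ((⟨h, -⟩ | ⟨h, -⟩) | ⟨h, -⟩) <;> exact h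
  have hd1 : Disjoint (Es N ∪ Eeo N) (Eoe N) := by
    rw [Set.disjoint_left]
    rintro x hx ⟨-, h1⟩
    simp only [Set.mem_setOf_eq] at h1
    rcases hx with ⟨-, h0⟩ | ⟨-, h0⟩ <;> simp only [Set.mem_setOf_eq] at h0 <;> omega
  have hd2 : Disjoint (Es N) (Eeo N) := by
    rw [Set.disjoint_left]
    rintro x ⟨-, h0⟩ ⟨-, h1⟩
    simp only [Set.mem_setOf_eq] at h0 h1
    omega
  rw [heq, Set.ncard_union_eq hd1 (f1.union f2) f3, Set.ncard_union_eq hd2 f1 f2]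

set_option maxHeartbeats 1000000 in
set_option maxHeartbeats 1000000 in
private lemma Bo_split {N : ℤ} (hN : N % 4 = 0) :
    (Bo N).ncard = (P111 N).ncard + (P100 N).ncard + (P010 N).ncard + (P001 N).ncard := by
  have hfin := sol_fin ![1,1,2,2,2,4,4] (by decide) N
  have f1 : (P111 N).Finite := hfin.subset Set.inter_subset_left
  have f2 : (P100 N).Finite := hfin.subset Set.inter_subset_left
  have f3 : (P010 N).Finite := hfin.subset Set.inter_subset_left
  have f4 : (P001 N).Finite := hfin.subset Set.inter_subset_left
  have heq : Bo N = ((P111 N ∪ P100 N) ∪ P010 N) ∪ P001 N := by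
    ext x
    simp only [Bo, P111, P100, P010, P001, Set.mem_union, Set.mem_inter_iff, Set.mem_setOf_eq]
    constructor
    · rintro ⟨h, h0⟩
      have hs := h
      rw [memB] at hs
      obtain ⟨a0, -, c0, -⟩ := sqf (x 0)
      obtain ⟨a1, -, c1, -⟩ := sqf (x 1)
      obtain ⟨a2, -, -, -⟩ := sqf (x 2)
      obtain ⟨a3, -, -, -⟩ := sqf (x 3)
      obtain ⟨a4, -, -, -⟩ := sqf (x 4)
      have e0 : x 0 ^ 2 % 8 = 1 := c0 h0
      have hx1 : x 1 % 2 = 1 := by clear h hfin f1 f2 f3 f4 c0 c1; omega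
      have e1 : x 1 ^ 2 % 8 = 1 := c1 hx1
      have hpat : (x 2 % 2 = 1 ∧ x 3 % 2 = 1 ∧ x 4 % 2 = 1) ∨
          (x 2 % 2 = 1 ∧ x 3 % 2 = 0 ∧ x 4 % 2 = 0) ∨
          (x 2 % 2 = 0 ∧ x 3 % 2 = 1 ∧ x 4 % 2 = 0) ∨
          (x 2 % 2 = 0 ∧ x 3 % 2 = 0 ∧ x 4 % 2 = 1) := by
        clear h hfin f1 f2 f3 f4 c0 c1 a0 a1 h0 hx1; omega
      rcases hpat with hp | hp | hp | hp
      · exact Or.inl (Or.inl (Or.inl ⟨h, h0, hp.1, hp.2.1, hp.2.2⟩))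
      · exact Or.inl (Or.inl (Or.inr ⟨h, h0, hp.1, hp.2.1, hp.2.2⟩))
      · exact Or.inl (Or.inr ⟨h, h0, hp.1, hp.2.1, hp.2.2⟩)
      · exact Or.inr ⟨h, h0, hp.1, hp.2.1, hp.2.2⟩
    · rintro (((⟨h, h0, -⟩ | ⟨h, h0, -⟩) | ⟨h, h0, -⟩) | ⟨h, h0, -⟩) <;> exact ⟨h, h0⟩
  have hd1 : Disjoint ((P111 N ∪ P100 N) ∪ P010 N) (P001 N) := by
    rw [Set.disjoint_left]
    rintro x hx ⟨-, h1⟩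
    simp only [Set.mem_setOf_eq] at h1
    rcases hx with (⟨-, h0⟩ | ⟨-, h0⟩) | ⟨-, h0⟩ <;>
      simp only [Set.mem_setOf_eq] at h0 <;> omega
  have hd2 : Disjoint (P111 N ∪ P100 N) (P010 N) := by
    rw [Set.disjoint_left]
    rintro x hx ⟨-, h1⟩
    simp only [Set.mem_setOf_eq] at h1
    rcases hx with ⟨-, h0⟩ | ⟨-, h0⟩ <;> simp only [Set.mem_setOf_eq] at h0 <;> omega
  have hd3 : Disjoint (P111 N) (P100 N) := by
    rw [Set.disjoint_left]
    rintro x ⟨-, h0⟩ ⟨-, h1⟩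
    simp only [Set.mem_setOf_eq] at h0 h1
    omega
  rw [heq, Set.ncard_union_eq hd1 ((f1.union f2).union f3) f4,
    Set.ncard_union_eq hd2 (f1.union f2) f3, Set.ncard_union_eq hd3 f1 f2]

set_option maxHeartbeats 1000000 in
private lemma Fst_split {N : ℤ} (hN : N % 8 = 0) :
    (Fst N).ncard = (FA N).ncard + (FB N).ncard := by
  have hfin := sol_fin ![1,1,2,4,4,4,4] (by decide) N
  have f1 : (FA N).Finite := hfin.subset Set.inter_subset_left
  have f2 : (FB N).Finite := hfin.subset Set.inter_subset_left
  have heq : Fst N = FA N ∪ FB N := by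
    ext z
    simp only [Fst, FA, FB, Set.mem_union, Set.mem_inter_iff, Set.mem_setOf_eq]
    constructor
    · rintro ⟨h, h0, h1, h2⟩
      have hs := h
      rw [memF] at hs
      obtain ⟨-, -, c0, -⟩ := sqf (z 0)
      obtain ⟨-, -, c1, -⟩ := sqf (z 1)
      obtain ⟨-, -, c2, -⟩ := sqf (z 2)
      obtain ⟨a3, -, -, -⟩ := sqf (z 3)
      obtain ⟨a4, -, -, -⟩ := sqf (z 4)
      obtain ⟨a5, -, -, -⟩ := sqf (z 5)
      obtain ⟨a6, -, -, -⟩ := sqf (z 6)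
      have e0 : z 0 ^ 2 % 8 = 1 := c0 h0
      have e1 : z 1 ^ 2 % 8 = 1 := c1 h1
      have e2 : z 2 ^ 2 % 8 = 1 := c2 h2
      have hpat : (z 3 % 2 = z 4 % 2 ∧ (z 5 + z 6) % 2 = 1) ∨
          ((z 3 + z 4) % 2 = 1 ∧ z 5 % 2 = z 6 % 2) := by
        clear h hfin f1 f2 c0 c1 c2 h0 h1 h2; omega
      rcases hpat with hp | hp
      · exact Or.inl ⟨h, h0, h1, h2, hp.1, hp.2⟩
      · exact Or.inr ⟨h, h0, h1, h2, hp.1, hp.2⟩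
    · rintro (⟨h, h0, h1, h2, -⟩ | ⟨h, h0, h1, h2, -⟩) <;> exact ⟨h, h0, h1, h2⟩
  have hd : Disjoint (FA N) (FB N) := by
    rw [Set.disjoint_left]
    rintro x ⟨-, h0⟩ ⟨-, h1⟩
    simp only [Set.mem_setOf_eq] at h0 h1
    omega
  rw [heq, Set.ncard_union_eq hd f1 f2]

set_option maxHeartbeats 1000000 in
private lemma Co_split {N : ℤ} (hN : N % 2 = 0) :
    (Co N).ncard = (C1 N).ncard + (C2 N).ncard := by
  have hfin := sol_fin ![1,1,1,2,4,4,4] (by decide) N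
  have f1 : (C1 N).Finite := hfin.subset Set.inter_subset_left
  have f2 : (C2 N).Finite := hfin.subset Set.inter_subset_left
  have heq : Co N = C1 N ∪ C2 N := by
    ext x
    simp only [Co, C1, C2, Set.mem_union, Set.mem_inter_iff, Set.mem_setOf_eq]
    constructor
    · rintro ⟨h, h0⟩
      have hs := h
      rw [memC] at hs
      obtain ⟨a0, -, -, -⟩ := sqf (x 0)
      obtain ⟨a1, -, -, -⟩ := sqf (x 1)
      obtain ⟨a2, -, -, -⟩ := sqf (x 2)
      have hpat : (x 1 % 2 = 1 ∧ x 2 % 2 = 0) ∨ (x 1 % 2 = 0 ∧ x 2 % 2 = 1) := by clear h hfin f1 f2; omega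
      rcases hpat with hp | hp
      · exact Or.inl ⟨h, h0, hp.1, hp.2⟩
      · exact Or.inr ⟨h, h0, hp.1, hp.2⟩
    · rintro (⟨h, h0, -⟩ | ⟨h, h0, -⟩) <;> exact ⟨h, h0⟩
  have hd : Disjoint (C1 N) (C2 N) := by
    rw [Set.disjoint_left]
    rintro x ⟨-, h0⟩ ⟨-, h1⟩
    simp only [Set.mem_setOf_eq] at h0 h1
    omega
  rw [heq, Set.ncard_union_eq hd f1 f2]
set_option maxHeartbeats 1000000 in
private lemma idBeCe {N : ℤ} (hN : N % 2 = 0) : (Be N).ncard = (Ce N).ncard := by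
  apply ncard_bij (fun x => ![x 0, x 3 + x 4, x 3 - x 4, x 2, x 5, x 6, x 1 / 2])
      (fun y => ![y 0, 2 * y 6, y 3, (y 1 + y 2) / 2, (y 1 - y 2) / 2, y 4, y 5])
  · rintro x ⟨hsol, h0⟩
    simp only [Set.mem_setOf_eq] at h0
    rw [memB] at hsol
    obtain ⟨a0, -, -, -⟩ := sqf (x 0)
    obtain ⟨a1, -, -, -⟩ := sqf (x 1)
    have h1 : x 1 % 2 = 0 := by omega
    obtain ⟨k, hk⟩ : ∃ k, x 1 = 2 * k := ⟨x 1 / 2, by omega⟩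
    refine ⟨?_, ?_⟩
    · rw [memC]
      simp only [cv0, cv1, cv2, cv3, cv4, cv5, cv6]
      rw [hk] at hsol ⊢
      have e1 : 2 * k / 2 = k := by omega
      rw [e1]
      linear_combination hsol
    · simp only [Set.mem_setOf_eq, cv0]
      exact h0
  · rintro y ⟨hsol, h0⟩
    simp only [Set.mem_setOf_eq] at h0
    rw [memC] at hsol
    obtain ⟨a0, -, -, -⟩ := sqf (y 0)
    obtain ⟨a1, -, -, -⟩ := sqf (y 1)
    obtain ⟨a2, -, -, -⟩ := sqf (y 2)
    have h12 : y 1 % 2 = y 2 % 2 := by omega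
    obtain ⟨u, hu⟩ : ∃ u, y 1 + y 2 = 2 * u := ⟨(y 1 + y 2) / 2, by omega⟩
    obtain ⟨v, hv⟩ : ∃ v, y 1 - y 2 = 2 * v := ⟨(y 1 - y 2) / 2, by omega⟩
    have hy1 : y 1 = u + v := by omega
    have hy2 : y 2 = u - v := by omega
    refine ⟨?_, ?_⟩
    · rw [memB]
      simp only [cv0, cv1, cv2, cv3, cv4, cv5, cv6]
      rw [hu, hv]
      rw [hy1, hy2] at hsol
      have e1 : 2 * u / 2 = u := by omega
      have e2 : 2 * v / 2 = v := by omega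
      rw [e1, e2]
      linear_combination hsol
    · simp only [Set.mem_setOf_eq, cv0]
      exact h0
  · rintro x ⟨hsol, h0⟩
    simp only [Set.mem_setOf_eq] at h0
    rw [memB] at hsol
    obtain ⟨a0, -, -, -⟩ := sqf (x 0)
    obtain ⟨a1, -, -, -⟩ := sqf (x 1)
    apply funext7 <;> simp only [cv0, cv1, cv2, cv3, cv4, cv5, cv6] <;> omega
  · rintro y ⟨hsol, h0⟩
    simp only [Set.mem_setOf_eq] at h0
    rw [memC] at hsol
    obtain ⟨a0, -, -, -⟩ := sqf (y 0)
    obtain ⟨a1, -, -, -⟩ := sqf (y 1)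
    obtain ⟨a2, -, -, -⟩ := sqf (y 2)
    apply funext7 <;> simp only [cv0, cv1, cv2, cv3, cv4, cv5, cv6] <;> omega

set_option maxHeartbeats 1000000 in
private lemma idC1C2 (N : ℤ) : (C1 N).ncard = (C2 N).ncard := by
  apply ncard_bij (fun c => ![c 0, c 2, c 1, c 3, c 4, c 5, c 6])
      (fun c => ![c 0, c 2, c 1, c 3, c 4, c 5, c 6])
  · rintro c ⟨hsol, h0, h1, h2⟩
    rw [memC] at hsol
    refine ⟨?_, ?_⟩
    · rw [memC]
      simp only [cv0, cv1, cv2, cv3, cv4, cv5, cv6]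
      linear_combination hsol
    · simp only [Set.mem_setOf_eq, cv0, cv1, cv2]
      exact ⟨h0, h2, h1⟩
  · rintro c ⟨hsol, h0, h1, h2⟩
    rw [memC] at hsol
    refine ⟨?_, ?_⟩
    · rw [memC]
      simp only [cv0, cv1, cv2, cv3, cv4, cv5, cv6]
      linear_combination hsol
    · simp only [Set.mem_setOf_eq, cv0, cv1, cv2]
      exact ⟨h0, h2, h1⟩
  · rintro c -
    apply funext7 <;> rfl
  · rintro c -
    apply funext7 <;> rfl

set_option maxHeartbeats 1000000 in
private lemma idC1F {N : ℤ} (hN : N % 4 = 0) : (C1 N).ncard = (Fst N).ncard := by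
  apply ncard_bij (fun c => ![c 0, c 1, c 3, c 4, c 5, c 6, c 2 / 2])
      (fun z => ![z 0, z 1, 2 * z 6, z 2, z 3, z 4, z 5])
  · rintro c ⟨hsol, h0, h1, h2⟩
    rw [memC] at hsol
    obtain ⟨a0, b0, c0, d0⟩ := sqf (c 0)
    obtain ⟨a1, b1, c1, d1⟩ := sqf (c 1)
    obtain ⟨a2, b2, c2, d2⟩ := sqf (c 2)
    obtain ⟨a3, b3, c3, d3⟩ := sqf (c 3)
    have h3 : c 3 % 2 = 1 := by omega
    obtain ⟨k, hk⟩ : ∃ k, c 2 = 2 * k := ⟨c 2 / 2, by omega⟩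
    refine ⟨?_, ?_⟩
    · rw [memF]
      simp only [cv0, cv1, cv2, cv3, cv4, cv5, cv6]
      rw [hk] at hsol ⊢
      have e1 : 2 * k / 2 = k := by omega
      rw [e1]
      linear_combination hsol
    · simp only [Set.mem_setOf_eq, cv0, cv1, cv2]
      exact ⟨h0, h1, h3⟩
  · rintro z ⟨hsol, h0, h1, h2⟩
    rw [memF] at hsol
    refine ⟨?_, ?_⟩
    · rw [memC]
      simp only [cv0, cv1, cv2, cv3, cv4, cv5, cv6]
      linear_combination hsol
    · simp only [Set.mem_setOf_eq, cv0, cv1, cv2]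
      refine ⟨h0, h1, by omega⟩
  · rintro c ⟨hsol, h0, h1, h2⟩
    apply funext7 <;> simp only [cv0, cv1, cv2, cv3, cv4, cv5, cv6] <;> omega
  · rintro z ⟨hsol, h0, h1, h2⟩
    apply funext7 <;> simp only [cv0, cv1, cv2, cv3, cv4, cv5, cv6] <;> omega
set_option maxHeartbeats 1000000 in
private lemma idP111 {N : ℤ} (hN : N % 8 = 0) : (P111 N).ncard = (FA N).ncard := by
  apply ncard_bij (fun x => ![x 0, x 1, x 2, x 5, x 6, (x 3 + x 4) / 2, (x 3 - x 4) / 2])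
      (fun z => ![z 0, z 1, z 2, z 5 + z 6, z 5 - z 6, z 3, z 4])
  · rintro x ⟨hsol, h0, h2, h3, h4⟩
    rw [memB] at hsol
    obtain ⟨a0, -, c0, d0⟩ := sqf (x 0)
    obtain ⟨a1, -, c1, d1⟩ := sqf (x 1)
    obtain ⟨a2, -, c2, d2⟩ := sqf (x 2)
    obtain ⟨a3, -, c3, d3⟩ := sqf (x 3)
    obtain ⟨a4, -, c4, d4⟩ := sqf (x 4)
    obtain ⟨a5, -, -, -⟩ := sqf (x 5)
    obtain ⟨a6, -, -, -⟩ := sqf (x 6)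
    have e0 : x 0 ^ 2 % 8 = 1 := c0 h0
    have hx1 : x 1 % 2 = 1 := by clear c0 c1 c2 c3 c4 d0 d1 d2 d3 d4; omega
    have e1 : x 1 ^ 2 % 8 = 1 := c1 hx1
    have e2 : x 2 ^ 2 % 8 = 1 ∨ x 2 ^ 2 % 8 = 0 ∨ x 2 ^ 2 % 8 = 4 := by
      rcases Int.emod_two_eq (x 2) with hp | hp
      · rcases d2 hp with h' | h' <;> omega
      · exact Or.inl (c2 hp)
    have e3 : x 3 ^ 2 % 8 = 1 ∨ x 3 ^ 2 % 8 = 0 ∨ x 3 ^ 2 % 8 = 4 := by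
      rcases Int.emod_two_eq (x 3) with hp | hp
      · rcases d3 hp with h' | h' <;> omega
      · exact Or.inl (c3 hp)
    have e4 : x 4 ^ 2 % 8 = 1 ∨ x 4 ^ 2 % 8 = 0 ∨ x 4 ^ 2 % 8 = 4 := by
      rcases Int.emod_two_eq (x 4) with hp | hp
      · rcases d4 hp with h' | h' <;> omega
      · exact Or.inl (c4 hp)
    clear c0 c1 c2 c3 c4 d0 d1 d2 d3 d4
    have h56 : x 5 % 2 = x 6 % 2 := by omega
    obtain ⟨u, hu⟩ : ∃ u, x 3 + x 4 = 2 * u := ⟨(x 3 + x 4) / 2, by omega⟩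
    obtain ⟨v, hv⟩ : ∃ v, x 3 - x 4 = 2 * v := ⟨(x 3 - x 4) / 2, by omega⟩
    have hxi : x 3 = u + v := by omega
    have hxj : x 4 = u - v := by omega
    refine ⟨?_, ?_⟩
    · rw [memF]
      simp only [cv0, cv1, cv2, cv3, cv4, cv5, cv6]
      rw [hu, hv]
      rw [hxi, hxj] at hsol
      have e1 : 2 * u / 2 = u := by omega
      have e2 : 2 * v / 2 = v := by omega
      rw [e1, e2]
      linear_combination hsol
    · simp only [Set.mem_setOf_eq, cv0, cv1, cv2, cv3, cv4, cv5, cv6]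
      omega
  · rintro z ⟨hsol, h0, h1, h2, h34, h56⟩
    rw [memF] at hsol
    refine ⟨?_, ?_⟩
    · rw [memB]
      simp only [cv0, cv1, cv2, cv3, cv4, cv5, cv6]
      linear_combination hsol
    · simp only [Set.mem_setOf_eq, cv0, cv1, cv2, cv3, cv4, cv5, cv6]
      omega
  · rintro x ⟨hsol, h0, h2, h3, h4⟩
    apply funext7 <;> simp only [cv0, cv1, cv2, cv3, cv4, cv5, cv6] <;> omega
  · rintro z ⟨hsol, h0, h1, h2, h34, h56⟩
    apply funext7 <;> simp only [cv0, cv1, cv2, cv3, cv4, cv5, cv6] <;> omega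

set_option maxHeartbeats 1000000 in
private lemma idP100 {N : ℤ} (hN : N % 8 = 0) : (P100 N).ncard = (FB N).ncard := by
  apply ncard_bij (fun x => ![x 0, x 1, x 2, x 5, x 6, (x 3 + x 4) / 2, (x 3 - x 4) / 2])
      (fun z => ![z 0, z 1, z 2, z 5 + z 6, z 5 - z 6, z 3, z 4])
  · rintro x ⟨hsol, h0, h2, h3, h4⟩
    rw [memB] at hsol
    obtain ⟨a0, -, c0, d0⟩ := sqf (x 0)
    obtain ⟨a1, -, c1, d1⟩ := sqf (x 1)
    obtain ⟨a2, -, c2, d2⟩ := sqf (x 2)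
    obtain ⟨a3, -, c3, d3⟩ := sqf (x 3)
    obtain ⟨a4, -, c4, d4⟩ := sqf (x 4)
    obtain ⟨a5, -, -, -⟩ := sqf (x 5)
    obtain ⟨a6, -, -, -⟩ := sqf (x 6)
    have e0 : x 0 ^ 2 % 8 = 1 := c0 h0
    have hx1 : x 1 % 2 = 1 := by clear c0 c1 c2 c3 c4 d0 d1 d2 d3 d4; omega
    have e1 : x 1 ^ 2 % 8 = 1 := c1 hx1
    have e2 : x 2 ^ 2 % 8 = 1 ∨ x 2 ^ 2 % 8 = 0 ∨ x 2 ^ 2 % 8 = 4 := by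
      rcases Int.emod_two_eq (x 2) with hp | hp
      · rcases d2 hp with h' | h' <;> omega
      · exact Or.inl (c2 hp)
    have e3 : x 3 ^ 2 % 8 = 1 ∨ x 3 ^ 2 % 8 = 0 ∨ x 3 ^ 2 % 8 = 4 := by
      rcases Int.emod_two_eq (x 3) with hp | hp
      · rcases d3 hp with h' | h' <;> omega
      · exact Or.inl (c3 hp)
    have e4 : x 4 ^ 2 % 8 = 1 ∨ x 4 ^ 2 % 8 = 0 ∨ x 4 ^ 2 % 8 = 4 := by
      rcases Int.emod_two_eq (x 4) with hp | hp
      · rcases d4 hp with h' | h' <;> omega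
      · exact Or.inl (c4 hp)
    clear c0 c1 c2 c3 c4 d0 d1 d2 d3 d4
    have h56 : (x 5 + x 6) % 2 = 1 := by omega
    obtain ⟨u, hu⟩ : ∃ u, x 3 + x 4 = 2 * u := ⟨(x 3 + x 4) / 2, by omega⟩
    obtain ⟨v, hv⟩ : ∃ v, x 3 - x 4 = 2 * v := ⟨(x 3 - x 4) / 2, by omega⟩
    have hxi : x 3 = u + v := by omega
    have hxj : x 4 = u - v := by omega
    refine ⟨?_, ?_⟩
    · rw [memF]
      simp only [cv0, cv1, cv2, cv3, cv4, cv5, cv6]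
      rw [hu, hv]
      rw [hxi, hxj] at hsol
      have e1 : 2 * u / 2 = u := by omega
      have e2 : 2 * v / 2 = v := by omega
      rw [e1, e2]
      linear_combination hsol
    · simp only [Set.mem_setOf_eq, cv0, cv1, cv2, cv3, cv4, cv5, cv6]
      omega
  · rintro z ⟨hsol, h0, h1, h2, h34, h56⟩
    rw [memF] at hsol
    refine ⟨?_, ?_⟩
    · rw [memB]
      simp only [cv0, cv1, cv2, cv3, cv4, cv5, cv6]
      linear_combination hsol
    · simp only [Set.mem_setOf_eq, cv0, cv1, cv2, cv3, cv4, cv5, cv6]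
      omega
  · rintro x ⟨hsol, h0, h2, h3, h4⟩
    apply funext7 <;> simp only [cv0, cv1, cv2, cv3, cv4, cv5, cv6] <;> omega
  · rintro z ⟨hsol, h0, h1, h2, h34, h56⟩
    apply funext7 <;> simp only [cv0, cv1, cv2, cv3, cv4, cv5, cv6] <;> omega

set_option maxHeartbeats 1000000 in
private lemma idP010 {N : ℤ} (hN : N % 8 = 0) : (P010 N).ncard = (FB N).ncard := by
  apply ncard_bij (fun x => ![x 0, x 1, x 3, x 5, x 6, (x 2 + x 4) / 2, (x 2 - x 4) / 2])
      (fun z => ![z 0, z 1, z 5 + z 6, z 2, z 5 - z 6, z 3, z 4])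
  · rintro x ⟨hsol, h0, h2, h3, h4⟩
    rw [memB] at hsol
    obtain ⟨a0, -, c0, d0⟩ := sqf (x 0)
    obtain ⟨a1, -, c1, d1⟩ := sqf (x 1)
    obtain ⟨a2, -, c2, d2⟩ := sqf (x 2)
    obtain ⟨a3, -, c3, d3⟩ := sqf (x 3)
    obtain ⟨a4, -, c4, d4⟩ := sqf (x 4)
    obtain ⟨a5, -, -, -⟩ := sqf (x 5)
    obtain ⟨a6, -, -, -⟩ := sqf (x 6)
    have e0 : x 0 ^ 2 % 8 = 1 := c0 h0
    have hx1 : x 1 % 2 = 1 := by clear c0 c1 c2 c3 c4 d0 d1 d2 d3 d4; omega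
    have e1 : x 1 ^ 2 % 8 = 1 := c1 hx1
    have e2 : x 2 ^ 2 % 8 = 1 ∨ x 2 ^ 2 % 8 = 0 ∨ x 2 ^ 2 % 8 = 4 := by
      rcases Int.emod_two_eq (x 2) with hp | hp
      · rcases d2 hp with h' | h' <;> omega
      · exact Or.inl (c2 hp)
    have e3 : x 3 ^ 2 % 8 = 1 ∨ x 3 ^ 2 % 8 = 0 ∨ x 3 ^ 2 % 8 = 4 := by
      rcases Int.emod_two_eq (x 3) with hp | hp
      · rcases d3 hp with h' | h' <;> omega
      · exact Or.inl (c3 hp)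
    have e4 : x 4 ^ 2 % 8 = 1 ∨ x 4 ^ 2 % 8 = 0 ∨ x 4 ^ 2 % 8 = 4 := by
      rcases Int.emod_two_eq (x 4) with hp | hp
      · rcases d4 hp with h' | h' <;> omega
      · exact Or.inl (c4 hp)
    clear c0 c1 c2 c3 c4 d0 d1 d2 d3 d4
    have h56 : (x 5 + x 6) % 2 = 1 := by omega
    obtain ⟨u, hu⟩ : ∃ u, x 2 + x 4 = 2 * u := ⟨(x 2 + x 4) / 2, by omega⟩
    obtain ⟨v, hv⟩ : ∃ v, x 2 - x 4 = 2 * v := ⟨(x 2 - x 4) / 2, by omega⟩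
    have hxi : x 2 = u + v := by omega
    have hxj : x 4 = u - v := by omega
    refine ⟨?_, ?_⟩
    · rw [memF]
      simp only [cv0, cv1, cv2, cv3, cv4, cv5, cv6]
      rw [hu, hv]
      rw [hxi, hxj] at hsol
      have e1 : 2 * u / 2 = u := by omega
      have e2 : 2 * v / 2 = v := by omega
      rw [e1, e2]
      linear_combination hsol
    · simp only [Set.mem_setOf_eq, cv0, cv1, cv2, cv3, cv4, cv5, cv6]
      omega
  · rintro z ⟨hsol, h0, h1, h2, h34, h56⟩
    rw [memF] at hsol
    refine ⟨?_, ?_⟩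
    · rw [memB]
      simp only [cv0, cv1, cv2, cv3, cv4, cv5, cv6]
      linear_combination hsol
    · simp only [Set.mem_setOf_eq, cv0, cv1, cv2, cv3, cv4, cv5, cv6]
      omega
  · rintro x ⟨hsol, h0, h2, h3, h4⟩
    apply funext7 <;> simp only [cv0, cv1, cv2, cv3, cv4, cv5, cv6] <;> omega
  · rintro z ⟨hsol, h0, h1, h2, h34, h56⟩
    apply funext7 <;> simp only [cv0, cv1, cv2, cv3, cv4, cv5, cv6] <;> omega

set_option maxHeartbeats 1000000 in
private lemma idP001 {N : ℤ} (hN : N % 8 = 0) : (P001 N).ncard = (FB N).ncard := by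
  apply ncard_bij (fun x => ![x 0, x 1, x 4, x 5, x 6, (x 2 + x 3) / 2, (x 2 - x 3) / 2])
      (fun z => ![z 0, z 1, z 5 + z 6, z 5 - z 6, z 2, z 3, z 4])
  · rintro x ⟨hsol, h0, h2, h3, h4⟩
    rw [memB] at hsol
    obtain ⟨a0, -, c0, d0⟩ := sqf (x 0)
    obtain ⟨a1, -, c1, d1⟩ := sqf (x 1)
    obtain ⟨a2, -, c2, d2⟩ := sqf (x 2)
    obtain ⟨a3, -, c3, d3⟩ := sqf (x 3)
    obtain ⟨a4, -, c4, d4⟩ := sqf (x 4)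
    obtain ⟨a5, -, -, -⟩ := sqf (x 5)
    obtain ⟨a6, -, -, -⟩ := sqf (x 6)
    have e0 : x 0 ^ 2 % 8 = 1 := c0 h0
    have hx1 : x 1 % 2 = 1 := by clear c0 c1 c2 c3 c4 d0 d1 d2 d3 d4; omega
    have e1 : x 1 ^ 2 % 8 = 1 := c1 hx1
    have e2 : x 2 ^ 2 % 8 = 1 ∨ x 2 ^ 2 % 8 = 0 ∨ x 2 ^ 2 % 8 = 4 := by
      rcases Int.emod_two_eq (x 2) with hp | hp
      · rcases d2 hp with h' | h' <;> omega
      · exact Or.inl (c2 hp)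
    have e3 : x 3 ^ 2 % 8 = 1 ∨ x 3 ^ 2 % 8 = 0 ∨ x 3 ^ 2 % 8 = 4 := by
      rcases Int.emod_two_eq (x 3) with hp | hp
      · rcases d3 hp with h' | h' <;> omega
      · exact Or.inl (c3 hp)
    have e4 : x 4 ^ 2 % 8 = 1 ∨ x 4 ^ 2 % 8 = 0 ∨ x 4 ^ 2 % 8 = 4 := by
      rcases Int.emod_two_eq (x 4) with hp | hp
      · rcases d4 hp with h' | h' <;> omega
      · exact Or.inl (c4 hp)
    clear c0 c1 c2 c3 c4 d0 d1 d2 d3 d4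
    have h56 : (x 5 + x 6) % 2 = 1 := by omega
    obtain ⟨u, hu⟩ : ∃ u, x 2 + x 3 = 2 * u := ⟨(x 2 + x 3) / 2, by omega⟩
    obtain ⟨v, hv⟩ : ∃ v, x 2 - x 3 = 2 * v := ⟨(x 2 - x 3) / 2, by omega⟩
    have hxi : x 2 = u + v := by omega
    have hxj : x 3 = u - v := by omega
    refine ⟨?_, ?_⟩
    · rw [memF]
      simp only [cv0, cv1, cv2, cv3, cv4, cv5, cv6]
      rw [hu, hv]
      rw [hxi, hxj] at hsol
      have e1 : 2 * u / 2 = u := by omega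
      have e2 : 2 * v / 2 = v := by omega
      rw [e1, e2]
      linear_combination hsol
    · simp only [Set.mem_setOf_eq, cv0, cv1, cv2, cv3, cv4, cv5, cv6]
      omega
  · rintro z ⟨hsol, h0, h1, h2, h34, h56⟩
    rw [memF] at hsol
    refine ⟨?_, ?_⟩
    · rw [memB]
      simp only [cv0, cv1, cv2, cv3, cv4, cv5, cv6]
      linear_combination hsol
    · simp only [Set.mem_setOf_eq, cv0, cv1, cv2, cv3, cv4, cv5, cv6]
      omega
  · rintro x ⟨hsol, h0, h2, h3, h4⟩
    apply funext7 <;> simp only [cv0, cv1, cv2, cv3, cv4, cv5, cv6] <;> omega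
  · rintro z ⟨hsol, h0, h1, h2, h34, h56⟩
    apply funext7 <;> simp only [cv0, cv1, cv2, cv3, cv4, cv5, cv6] <;> omega

set_option maxHeartbeats 1000000 in
private lemma idFAFB {N : ℤ} : (FA N).ncard = (FB N).ncard := by
  apply ncard_bij (fun z => ![z 0, z 1, z 2, z 5, z 6, z 3, z 4])
      (fun z => ![z 0, z 1, z 2, z 5, z 6, z 3, z 4])
  · rintro z ⟨hsol, h0, h1, h2, h34, h56⟩
    rw [memF] at hsol
    refine ⟨?_, ?_⟩
    · rw [memF]
      simp only [cv0, cv1, cv2, cv3, cv4, cv5, cv6]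
      linear_combination hsol
    · simp only [Set.mem_setOf_eq, cv0, cv1, cv2, cv3, cv4, cv5, cv6]
      omega
  · rintro z ⟨hsol, h0, h1, h2, h34, h56⟩
    rw [memF] at hsol
    refine ⟨?_, ?_⟩
    · rw [memF]
      simp only [cv0, cv1, cv2, cv3, cv4, cv5, cv6]
      linear_combination hsol
    · simp only [Set.mem_setOf_eq, cv0, cv1, cv2, cv3, cv4, cv5, cv6]
      omega
  · rintro z -
    apply funext7 <;> rfl
  · rintro z -
    apply funext7 <;> rfl

set_option maxHeartbeats 1000000 in
private lemma idDsEs {N : ℤ} (hN : N % 2 = 0) : (Ds N).ncard = (Es N).ncard := by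
  apply ncard_bij (fun x => ![x 0, x 1, x 4 + x 5, x 4 - x 5, x 3, x 6, x 2 / 2])
      (fun y => ![y 0, y 1, 2 * y 6, y 4, (y 2 + y 3) / 2, (y 2 - y 3) / 2, y 5])
  · rintro x ⟨hsol, h01⟩
    simp only [Set.mem_setOf_eq] at h01
    rw [memD] at hsol
    obtain ⟨a0, -, -, -⟩ := sqf (x 0)
    obtain ⟨a1, -, -, -⟩ := sqf (x 1)
    obtain ⟨a2, -, -, -⟩ := sqf (x 2)
    have h2 : x 2 % 2 = 0 := by omega
    obtain ⟨k, hk⟩ : ∃ k, x 2 = 2 * k := ⟨x 2 / 2, by omega⟩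
    refine ⟨?_, ?_⟩
    · rw [memE]
      simp only [cv0, cv1, cv2, cv3, cv4, cv5, cv6]
      rw [hk] at hsol ⊢
      have e1 : 2 * k / 2 = k := by omega
      rw [e1]
      linear_combination hsol
    · simp only [Set.mem_setOf_eq, cv0, cv1]
      exact h01
  · rintro y ⟨hsol, h01⟩
    simp only [Set.mem_setOf_eq] at h01
    rw [memE] at hsol
    obtain ⟨a0, -, -, -⟩ := sqf (y 0)
    obtain ⟨a1, -, -, -⟩ := sqf (y 1)
    obtain ⟨a2, -, -, -⟩ := sqf (y 2)
    obtain ⟨a3, -, -, -⟩ := sqf (y 3)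
    have h23 : y 2 % 2 = y 3 % 2 := by omega
    obtain ⟨u, hu⟩ : ∃ u, y 2 + y 3 = 2 * u := ⟨(y 2 + y 3) / 2, by omega⟩
    obtain ⟨v, hv⟩ : ∃ v, y 2 - y 3 = 2 * v := ⟨(y 2 - y 3) / 2, by omega⟩
    have hy2 : y 2 = u + v := by omega
    have hy3 : y 3 = u - v := by omega
    refine ⟨?_, ?_⟩
    · rw [memD]
      simp only [cv0, cv1, cv2, cv3, cv4, cv5, cv6]
      rw [hu, hv]
      rw [hy2, hy3] at hsol
      have e1 : 2 * u / 2 = u := by omega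
      have e2 : 2 * v / 2 = v := by omega
      rw [e1, e2]
      linear_combination hsol
    · simp only [Set.mem_setOf_eq, cv0, cv1]
      exact h01
  · rintro x ⟨hsol, h01⟩
    simp only [Set.mem_setOf_eq] at h01
    rw [memD] at hsol
    obtain ⟨a0, -, -, -⟩ := sqf (x 0)
    obtain ⟨a1, -, -, -⟩ := sqf (x 1)
    obtain ⟨a2, -, -, -⟩ := sqf (x 2)
    apply funext7 <;> simp only [cv0, cv1, cv2, cv3, cv4, cv5, cv6] <;> omega
  · rintro y ⟨hsol, h01⟩
    simp only [Set.mem_setOf_eq] at h01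
    rw [memE] at hsol
    obtain ⟨a0, -, -, -⟩ := sqf (y 0)
    obtain ⟨a1, -, -, -⟩ := sqf (y 1)
    obtain ⟨a2, -, -, -⟩ := sqf (y 2)
    obtain ⟨a3, -, -, -⟩ := sqf (y 3)
    apply funext7 <;> simp only [cv0, cv1, cv2, cv3, cv4, cv5, cv6] <;> omega

set_option maxHeartbeats 1000000 in
private lemma idDeoBo (N : ℤ) : (Deo N).ncard = (Bo N).ncard := by
  apply ncard_bij (fun x => ![x 1, x 2, x 3, x 4, x 5, x 6, x 0 / 2])
      (fun b => ![2 * b 6, b 0, b 1, b 2, b 3, b 4, b 5])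
  · rintro x ⟨hsol, h0, h1⟩
    rw [memD] at hsol
    obtain ⟨k, hk⟩ : ∃ k, x 0 = 2 * k := ⟨x 0 / 2, by omega⟩
    refine ⟨?_, ?_⟩
    · rw [memB]
      simp only [cv0, cv1, cv2, cv3, cv4, cv5, cv6]
      rw [hk] at hsol ⊢
      have e1 : 2 * k / 2 = k := by omega
      rw [e1]
      linear_combination hsol
    · simp only [Set.mem_setOf_eq, cv0]
      exact h1
  · rintro b ⟨hsol, h0⟩
    simp only [Set.mem_setOf_eq] at h0
    rw [memB] at hsol
    refine ⟨?_, ?_⟩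
    · rw [memD]
      simp only [cv0, cv1, cv2, cv3, cv4, cv5, cv6]
      linear_combination hsol
    · simp only [Set.mem_setOf_eq, cv0, cv1]
      constructor
      · omega
      · exact h0
  · rintro x ⟨hsol, h0, h1⟩
    apply funext7 <;> simp only [cv0, cv1, cv2, cv3, cv4, cv5, cv6] <;> omega
  · rintro b ⟨hsol, h0⟩
    apply funext7 <;> simp only [cv0, cv1, cv2, cv3, cv4, cv5, cv6] <;> omega

set_option maxHeartbeats 1000000 in
private lemma idDoeDeo (N : ℤ) : (Doe N).ncard = (Deo N).ncard := by
  apply ncard_bij (fun x => ![x 1, x 0, x 2, x 3, x 4, x 5, x 6])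
      (fun x => ![x 1, x 0, x 2, x 3, x 4, x 5, x 6])
  · rintro x ⟨hsol, h0, h1⟩
    rw [memD] at hsol
    refine ⟨?_, ?_⟩
    · rw [memD]
      simp only [cv0, cv1, cv2, cv3, cv4, cv5, cv6]
      linear_combination hsol
    · simp only [Set.mem_setOf_eq, cv0, cv1]
      exact ⟨h1, h0⟩
  · rintro x ⟨hsol, h0, h1⟩
    rw [memD] at hsol
    refine ⟨?_, ?_⟩
    · rw [memD]
      simp only [cv0, cv1, cv2, cv3, cv4, cv5, cv6]
      linear_combination hsol
    · simp only [Set.mem_setOf_eq, cv0, cv1]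
      exact ⟨h1, h0⟩
  · rintro x -
    apply funext7 <;> rfl
  · rintro x -
    apply funext7 <;> rfl

set_option maxHeartbeats 1000000 in
private lemma idEeoCo (N : ℤ) : (Eeo N).ncard = (Co N).ncard := by
  apply ncard_bij (fun y => ![y 1, y 2, y 3, y 4, y 5, y 6, y 0 / 2])
      (fun c => ![2 * c 6, c 0, c 1, c 2, c 3, c 4, c 5])
  · rintro y ⟨hsol, h0, h1⟩
    rw [memE] at hsol
    obtain ⟨k, hk⟩ : ∃ k, y 0 = 2 * k := ⟨y 0 / 2, by omega⟩
    refine ⟨?_, ?_⟩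
    · rw [memC]
      simp only [cv0, cv1, cv2, cv3, cv4, cv5, cv6]
      rw [hk] at hsol ⊢
      have e1 : 2 * k / 2 = k := by omega
      rw [e1]
      linear_combination hsol
    · simp only [Set.mem_setOf_eq, cv0]
      exact h1
  · rintro c ⟨hsol, h0⟩
    simp only [Set.mem_setOf_eq] at h0
    rw [memC] at hsol
    refine ⟨?_, ?_⟩
    · rw [memE]
      simp only [cv0, cv1, cv2, cv3, cv4, cv5, cv6]
      linear_combination hsol
    · simp only [Set.mem_setOf_eq, cv0, cv1]
      constructor
      · omega
      · exact h0
  · rintro y ⟨hsol, h0, h1⟩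
    apply funext7 <;> simp only [cv0, cv1, cv2, cv3, cv4, cv5, cv6] <;> omega
  · rintro c ⟨hsol, h0⟩
    apply funext7 <;> simp only [cv0, cv1, cv2, cv3, cv4, cv5, cv6] <;> omega

set_option maxHeartbeats 1000000 in
private lemma idEoeEeo (N : ℤ) : (Eoe N).ncard = (Eeo N).ncard := by
  apply ncard_bij (fun x => ![x 1, x 0, x 2, x 3, x 4, x 5, x 6])
      (fun x => ![x 1, x 0, x 2, x 3, x 4, x 5, x 6])
  · rintro x ⟨hsol, h0, h1⟩
    rw [memE] at hsol
    refine ⟨?_, ?_⟩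
    · rw [memE]
      simp only [cv0, cv1, cv2, cv3, cv4, cv5, cv6]
      linear_combination hsol
    · simp only [Set.mem_setOf_eq, cv0, cv1]
      exact ⟨h1, h0⟩
  · rintro x ⟨hsol, h0, h1⟩
    rw [memE] at hsol
    refine ⟨?_, ?_⟩
    · rw [memE]
      simp only [cv0, cv1, cv2, cv3, cv4, cv5, cv6]
      linear_combination hsol
    · simp only [Set.mem_setOf_eq, cv0, cv1]
      exact ⟨h1, h0⟩
  · rintro x -
    apply funext7 <;> rfl
  · rintro x -
    apply funext7 <;> rfl

private lemma BoCo {N : ℤ} (hN : N % 8 = 0) : (Bo N).ncard = (Co N).ncard := by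
  have h4 : N % 4 = 0 := by omega
  have h2 : N % 2 = 0 := by omega
  have e1 := Bo_split h4
  have e2 := idP111 (N := N) hN
  have e3 := idP100 (N := N) hN
  have e4 := idP010 (N := N) hN
  have e5 := idP001 (N := N) hN
  have e6 := idFAFB (N := N)
  have e7 := Fst_split hN
  have e8 := idC1F h4
  have e9 := idC1C2 N
  have e10 := Co_split h2
  omega

private lemma idBC {N : ℤ} (hN : N % 8 = 0) :
    (sol ![1,1,2,2,2,4,4] N).ncard = (sol ![1,1,1,2,4,4,4] N).ncard := by
  have h2 : N % 2 = 0 := by omega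
  have e1 := B_split N
  have e2 := C_split N
  have e3 := idBeCe h2
  have e4 := BoCo hN
  omega

private lemma idDE {N : ℤ} (hN : N % 8 = 0) :
    (sol ![1,1,1,2,2,2,4] N).ncard = (sol ![1,1,1,1,2,4,4] N).ncard := by
  have h2 : N % 2 = 0 := by omega
  have e1 := D_split N
  have e2 := E_split N
  have e3 := idDsEs h2
  have e4 := idDeoBo N
  have e5 := idDoeDeo N
  have e6 := idEeoCo N
  have e7 := idEoeEeo N
  have e8 := BoCo hN
  omega

theorem stmt18 (n : ℕ) (hn : 0 < n) (h4 : n % 4 = 0) :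
    (r7 ![1, 2, 2, 2, 2, 2, 4] (n ^ 2) = r7 ![1, 1, 2, 2, 2, 4, 4] (n ^ 2) ∧
     r7 ![1, 1, 2, 2, 2, 4, 4] (n ^ 2) = r7 ![1, 1, 1, 2, 4, 4, 4] (n ^ 2)) ∧
    r7 ![1, 1, 1, 2, 2, 2, 4] (n ^ 2) = r7 ![1, 1, 1, 1, 2, 4, 4] (n ^ 2) := by
  obtain ⟨m, hm⟩ : ∃ m, n = 4 * m := ⟨n / 4, by omega⟩
  have hcast : ((n ^ 2 : ℕ) : ℤ) = 16 * (m : ℤ) ^ 2 := by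
    subst hm; push_cast; ring
  have h8 : ((n ^ 2 : ℕ) : ℤ) % 8 = 0 := by rw [hcast]; omega
  have h2 : ((n ^ 2 : ℕ) : ℤ) % 2 = 0 := by omega
  rw [r7_eq_sol, r7_eq_sol, r7_eq_sol, r7_eq_sol, r7_eq_sol]
  exact ⟨⟨id1 h2, idBC h8⟩, idDE h8⟩
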